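/- Sine is a Tauber–Wiener function: for every real interval [a,b] with a < b, every continuous function f : [a,b] → ℝ, and every ε > 0, there exist a positive integer N and real constants c_i, λ_i, θ_i (i = 1,…,N) such that |f(x) − Σ_{i=1}^N c_i sin(λ_i x + θ_i)| < ε for all x ∈ [a,b]. -/

import Mathlib

open scoped BigOperators

namespace SineTW

noncomputable def gen (a b l t : ℝ) : C(Set.Icc a b, ℝ) :=
  ⟨fun x => Real.sin (l * (x : ℝ) + t), by fun_prop⟩

noncomputable def genSet (a b : ℝ) : Set C(Set.Icc a b, ℝ) :=
  Set.range fun p : ℝ × ℝ => gen a b p.1 p.2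

lemma gen_mul (a b l₁ t₁ l₂ t₂ : ℝ) :
    gen a b l₁ t₁ * gen a b l₂ t₂ =
      (1/2 : ℝ) • gen a b (l₁ - l₂) (t₁ - t₂ + Real.pi/2)
        - (1/2 : ℝ) • gen a b (l₁ + l₂) (t₁ + t₂ + Real.pi/2) := by
  ext x
  simp only [ContinuousMap.mul_apply, ContinuousMap.sub_apply, ContinuousMap.smul_apply,
    smul_eq_mul, gen, ContinuousMap.coe_mk]
  have h1 : (l₁ - l₂) * (x : ℝ) + (t₁ - t₂ + Real.pi/2) =
      ((l₁ * x + t₁) - (l₂ * x + t₂)) + Real.pi/2 := by ring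
  have h2 : (l₁ + l₂) * (x : ℝ) + (t₁ + t₂ + Real.pi/2) =
      ((l₁ * x + t₁) + (l₂ * x + t₂)) + Real.pi/2 := by ring
  rw [h1, h2, Real.sin_add_pi_div_two, Real.sin_add_pi_div_two]
  have key : ∀ p q : ℝ, Real.sin p * Real.sin q
      = 1/2 * Real.cos (p - q) - 1/2 * Real.cos (p + q) := by
    intro p q
    rw [Real.cos_sub, Real.cos_add]
    ring
  rw [key]

noncomputable def sineSpan (a b : ℝ) : Submodule ℝ C(Set.Icc a b, ℝ) :=
  Submodule.span ℝ (genSet a b)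

lemma gen_mem (a b l t : ℝ) : gen a b l t ∈ sineSpan a b :=
  Submodule.subset_span ⟨(l, t), rfl⟩

lemma mul_mem_sineSpan (a b : ℝ) {u v : C(Set.Icc a b, ℝ)}
    (hu : u ∈ sineSpan a b) (hv : v ∈ sineSpan a b) : u * v ∈ sineSpan a b := by
  have key : ∀ p : ℝ × ℝ, ∀ v ∈ sineSpan a b, gen a b p.1 p.2 * v ∈ sineSpan a b := by
    intro p v hv
    induction hv using Submodule.span_induction with
    | mem w hw =>
      obtain ⟨q, rfl⟩ := hw
      rw [gen_mul]
      exact sub_mem (Submodule.smul_mem _ _ (gen_mem _ _ _ _))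
        (Submodule.smul_mem _ _ (gen_mem _ _ _ _))
    | zero => simpa using (sineSpan a b).zero_mem
    | add w₁ w₂ _ _ h1 h2 => rw [mul_add]; exact add_mem h1 h2
    | smul r w _ h => rw [mul_smul_comm]; exact Submodule.smul_mem _ _ h
  induction hu using Submodule.span_induction with
  | mem w hw => obtain ⟨p, rfl⟩ := hw; exact key p v hv
  | zero => simpa using (sineSpan a b).zero_mem
  | add w₁ w₂ _ _ h1 h2 => rw [add_mul]; exact add_mem h1 h2
  | smul r w _ h => rw [smul_mul_assoc]; exact Submodule.smul_mem _ _ h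

lemma one_mem_sineSpan (a b : ℝ) : (1 : C(Set.Icc a b, ℝ)) ∈ sineSpan a b := by
  have : (1 : C(Set.Icc a b, ℝ)) = (2 : ℝ) • gen a b 0 (Real.pi/6) := by
    ext x
    simp [gen, Real.sin_pi_div_six]
  rw [this]
  exact Submodule.smul_mem _ _ (gen_mem _ _ _ _)

noncomputable def sineAlg (a b : ℝ) : Subalgebra ℝ C(Set.Icc a b, ℝ) where
  carrier := sineSpan a b
  mul_mem' := mul_mem_sineSpan a b
  add_mem' := fun h1 h2 => add_mem h1 h2
  zero_mem' := (sineSpan a b).zero_mem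
  one_mem' := one_mem_sineSpan a b
  algebraMap_mem' := fun r => by
    rw [Algebra.algebraMap_eq_smul_one]
    exact Submodule.smul_mem _ _ (one_mem_sineSpan a b)

lemma sineAlg_separates (a b : ℝ) : (sineAlg a b).SeparatesPoints := by
  intro x y hxy
  set M : ℝ := max |a| |b| + 1 with hM
  have hM0 : (0 : ℝ) < M := by positivity
  have hbound : ∀ z : Set.Icc a b, (1/M) * (z : ℝ) ∈ Set.Icc (-(Real.pi/2)) (Real.pi/2) := by
    intro z
    have hz : |(z : ℝ)| ≤ max |a| |b| := by
      rcases z.2 with ⟨h1, h2⟩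
      rcases abs_le.mp (le_refl |(z:ℝ)|) with _
      rw [abs_le]
      constructor
      · exact le_trans (neg_le_neg (le_max_left |a| |b|)) (le_trans (neg_abs_le a) h1)
      · exact le_trans h2 (le_trans (le_abs_self b) (le_max_right |a| |b|))
    have habs : |(1/M) * (z : ℝ)| ≤ (max |a| |b|) / M := by
      rw [abs_mul, abs_of_pos (by positivity : (0:ℝ) < 1/M), one_div, inv_mul_eq_div]
      exact (div_le_div_iff_of_pos_right hM0).mpr hz
    have hlt : (max |a| |b|) / M < 1 := by
      rw [div_lt_one hM0]
      simp [hM]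
    have hpi : (1 : ℝ) ≤ Real.pi/2 := by
      have := Real.pi_gt_three
      linarith
    have : |(1/M) * (z : ℝ)| ≤ Real.pi/2 := le_trans habs (le_trans hlt.le hpi)
    rwa [abs_le] at this
  refine ⟨_, ⟨gen a b (1/M) 0, gen_mem a b (1/M) 0, rfl⟩, ?_⟩
  have hne : (1/M) * (x : ℝ) ≠ (1/M) * (y : ℝ) := by
    intro h
    apply hxy
    apply Subtype.ext
    have h1M : (1/M : ℝ) ≠ 0 := by positivity
    exact mul_left_cancel₀ h1M h
  have := Real.strictMonoOn_sin.injOn.ne (hbound x) (hbound y) hne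
  simpa [gen] using this

end SineTW

/-- Sine is a Tauber–Wiener function: finite linear combinations of dilated and
shifted sines are dense in `C[a,b]` for every interval `[a,b]`. -/
theorem sine_is_tauber_wiener (a b : ℝ) (hab : a < b) (f : ℝ → ℝ)
    (hf : ContinuousOn f (Set.Icc a b)) (ε : ℝ) (hε : 0 < ε) :
    ∃ N : ℕ, 0 < N ∧ ∃ c lam θ : Fin N → ℝ,
      ∀ x ∈ Set.Icc a b,
        |f x - ∑ i : Fin N, c i * Real.sin (lam i * x + θ i)| < ε := by
  classical
  haveI : CompactSpace (Set.Icc a b) := isCompact_iff_compactSpace.mp isCompact_Icc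
  obtain ⟨g, hg⟩ := ContinuousMap.exists_mem_subalgebra_near_continuous_of_separatesPoints
    (SineTW.sineAlg a b) (SineTW.sineAlg_separates a b)
    ((Set.Icc a b).restrict f) hf.restrict ε hε
  -- g ∈ span; show every element of span has the desired finite-sum form
  have hrep : ∀ h ∈ SineTW.sineSpan a b, ∃ N : ℕ, ∃ c lam θ : Fin N → ℝ,
      ∀ x : Set.Icc a b, h x = ∑ i : Fin N, c i * Real.sin (lam i * (x : ℝ) + θ i) := by
    intro h hh
    induction hh using Submodule.span_induction with
    | mem w hw =>
      obtain ⟨p, rfl⟩ := hw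
      exact ⟨1, fun _ => 1, fun _ => p.1, fun _ => p.2, fun x => by
        simp [SineTW.gen]⟩
    | zero => exact ⟨0, Fin.elim0, Fin.elim0, Fin.elim0, fun x => by simp⟩
    | add w₁ w₂ _ _ ih1 ih2 =>
      obtain ⟨N₁, c₁, l₁, t₁, h1⟩ := ih1
      obtain ⟨N₂, c₂, l₂, t₂, h2⟩ := ih2
      refine ⟨N₁ + N₂, Fin.append c₁ c₂, Fin.append l₁ l₂, Fin.append t₁ t₂, fun x => ?_⟩
      rw [ContinuousMap.add_apply, h1 x, h2 x, Fin.sum_univ_add]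
      simp [Fin.append_left, Fin.append_right]
    | smul r w _ ih =>
      obtain ⟨N, c, l, t, h1⟩ := ih
      refine ⟨N, fun i => r * c i, l, t, fun x => ?_⟩
      rw [ContinuousMap.smul_apply, h1 x, smul_eq_mul, Finset.mul_sum]
      exact Finset.sum_congr rfl fun i _ => by ring
  obtain ⟨N, c, lam, θ, hrepg⟩ := hrep (g : C(Set.Icc a b, ℝ)) g.2
  refine ⟨N + 1, Nat.succ_pos N, Fin.cons 0 c, Fin.cons 0 lam, Fin.cons 0 θ, fun x hx => ?_⟩
  have hgx := hg ⟨x, hx⟩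
  rw [Real.norm_eq_abs] at hgx
  have hsum : ∑ i : Fin (N+1), (Fin.cons 0 c : Fin (N+1) → ℝ) i *
      Real.sin ((Fin.cons 0 lam : Fin (N+1) → ℝ) i * x + (Fin.cons 0 θ : Fin (N+1) → ℝ) i)
      = ∑ i : Fin N, c i * Real.sin (lam i * x + θ i) := by
    rw [Fin.sum_univ_succ]
    simp
  have h' : ((g : C(Set.Icc a b, ℝ)) ⟨x, hx⟩ : ℝ)
      = ∑ i : Fin N, c i * Real.sin (lam i * x + θ i) := hrepg ⟨x, hx⟩
  have hkey : f x - ∑ i : Fin N, c i * Real.sin (lam i * x + θ i)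
      = -(((g : C(Set.Icc a b, ℝ)) ⟨x, hx⟩ : ℝ) - (Set.Icc a b).restrict f ⟨x, hx⟩) := by
    rw [h']
    show f x - _ = -(_ - f x)
    ring
  rw [hsum, hkey, abs_neg]
  exact hgx
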